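/- arXiv:1604.03787 — 5 statements merged into one kernel-verified Lean document; each statement's English description precedes it below -/
import Mathlib

section
/- For every integer n ≥ 0, every integer k, every integer m ≥ 1, and every real x: E_{n,p,q}^{(k)}(m·x) = Σ_{i=0}^{n} binom(n,i) · E_{i,p,q}^{(k)}(x) · (m−1)^{n−i} · x^{n−i}. -/
open Finset

/-- The `(p,q)`-integer `[m]_{p,q} = (p^m - q^m)/(p - q)`. -/
noncomputable def pqInt (p q : ℝ) (m : ℕ) : ℝ := (p ^ m - q ^ m) / (p - q)

/-- The exponential generating function `∑ f n * t^n / n!` of a sequence `f`. -/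
noncomputable def egf (f : ℕ → ℝ) : PowerSeries ℝ :=
  PowerSeries.mk fun n => f n / n.factorial

/-- Formal substitution of a power series `S` with zero constant term into the
`(p,q)`-polylogarithm `Li_{k,p,q}(s) = ∑_{m ≥ 1} s^m / [m]_{p,q}^k`.
(For `m > n` the series `S^m` has zero `n`-th coefficient, so the sum is finite.) -/
noncomputable def pqLi (p q : ℝ) (k : ℤ) (S : PowerSeries ℝ) : PowerSeries ℝ :=
  PowerSeries.mk fun n =>
    ∑ m ∈ Finset.Icc 1 n, PowerSeries.coeff n (S ^ m) / pqInt p q m ^ k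

theorem pqPolyEuler_nat_mul_arg
    (p q : ℝ) (hq : 0 < q) (hqp : q < p) (hp : p ≤ 1) (k : ℤ)
    (E : ℝ → ℕ → ℝ)
    (hE : ∀ x : ℝ,
      2 * pqLi p q k (1 - PowerSeries.rescale (-1) (PowerSeries.exp ℝ)) *
          PowerSeries.rescale x (PowerSeries.exp ℝ) =
        (1 + PowerSeries.exp ℝ) * egf (E x)) :
    ∀ (n : ℕ) (m : ℕ), 1 ≤ m → ∀ x : ℝ,
      E ((m : ℝ) * x) n =
        ∑ i ∈ Finset.range (n + 1),
          (n.choose i : ℝ) * E x i * ((m : ℝ) - 1) ^ (n - i) * x ^ (n - i) := by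
  intro n m hm x
  -- the key power-series identity
  have hunit : IsUnit (1 + PowerSeries.exp ℝ) := by
    rw [PowerSeries.isUnit_iff_constantCoeff]
    simp [PowerSeries.constantCoeff_exp]
  have key : egf (E ((m : ℝ) * x)) =
      egf (E x) * PowerSeries.rescale (((m : ℝ) - 1) * x) (PowerSeries.exp ℝ) := by
    apply hunit.mul_left_cancel
    rw [← mul_assoc, ← hE x, ← hE ((m : ℝ) * x)]
    rw [mul_assoc, mul_assoc, PowerSeries.exp_mul_exp_eq_exp_add]
    ring_nf
  have hc := congrArg (PowerSeries.coeff n) key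
  rw [PowerSeries.coeff_mul, Finset.Nat.sum_antidiagonal_eq_sum_range_succ
      (f := fun i j => (PowerSeries.coeff i (egf (E x))) *
        (PowerSeries.coeff j (PowerSeries.rescale (((m : ℝ) - 1) * x) (PowerSeries.exp ℝ))))]
      at hc
  simp only [egf, PowerSeries.coeff_mk, PowerSeries.coeff_rescale,
    PowerSeries.coeff_exp] at hc
  have hn : (n.factorial : ℝ) ≠ 0 := Nat.cast_ne_zero.mpr n.factorial_ne_zero
  have : E ((m : ℝ) * x) n = (n.factorial : ℝ) *
      ∑ i ∈ Finset.range (n + 1),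
        E x i / i.factorial * ((((m : ℝ) - 1) * x) ^ (n - i) *
          (algebraMap ℚ ℝ) (1 / (n - i).factorial)) := by
    rw [← hc]; field_simp
  rw [this, Finset.mul_sum]
  apply Finset.sum_congr rfl
  intro i hi
  have hin : i ≤ n := Nat.lt_succ_iff.mp (Finset.mem_range.mp hi)
  have hchoose : (n.choose i : ℝ) = n.factorial / (i.factorial * (n - i).factorial) :=
    Nat.cast_choose ℝ hin
  have hi0 : (i.factorial : ℝ) ≠ 0 := Nat.cast_ne_zero.mpr i.factorial_ne_zero
  have hni0 : ((n - i).factorial : ℝ) ≠ 0 := Nat.cast_ne_zero.mpr (n - i).factorial_ne_zero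
  simp only [map_div₀, map_one, map_natCast, mul_pow]
  rw [hchoose]
  field_simp
end

section
/- For every integer n ≥ 0, every integer k, and every real x: E_{n,p,q}^{(k)}(x) = Σ_{l=0}^{n} Σ_{i=l}^{n} binom(n,i) · S_2(i,l) · E_{n−i,p,q}^{(k)}(−l) · x^{(l)}, where x^{(l)} = x(x+1)⋯(x+l−1) is the rising factorial with x^{(0)} = 1. -/
open Finset

/-- Stirling numbers of the second kind: the number of partitions of an
`n`-element set into `m` nonempty blocks. -/
def stirling2 : ℕ → ℕ → ℕ
  | 0, 0 => 1
  | 0, _ + 1 => 0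
  | _ + 1, 0 => 0
  | n + 1, m + 1 => (m + 1) * stirling2 n (m + 1) + stirling2 n m

lemma stirling2_zero_right (n : ℕ) : stirling2 (n+1) 0 = 0 := rfl

lemma stirling2_eq_zero_of_lt : ∀ {n l : ℕ}, n < l → stirling2 n l = 0 := by
  intro n
  induction n with
  | zero => intro l hl; match l, hl with
            | l+1, _ => rfl
  | succ n ih =>
      intro l hl
      match l, hl with
      | l+1, hl =>
        show (l + 1) * stirling2 n (l + 1) + stirling2 n l = 0
        rw [ih (by omega), ih (by omega)]
        ring

lemma coeff_exp_real (n : ℕ) : PowerSeries.coeff n (PowerSeries.exp ℝ) = 1 / n.factorial := by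
  rw [PowerSeries.coeff_exp]; simp

lemma derivative_exp_real : PowerSeries.derivative ℝ (PowerSeries.exp ℝ) = PowerSeries.exp ℝ := by
  ext n
  rw [PowerSeries.coeff_derivative, coeff_exp_real, coeff_exp_real, Nat.factorial_succ]
  have h0 : (n.factorial:ℝ) ≠ 0 := Nat.cast_ne_zero.mpr n.factorial_ne_zero
  push_cast
  field_simp


lemma coeff_expm1_pow : ∀ (n l : ℕ), PowerSeries.coeff n ((PowerSeries.exp ℝ - 1)^l) =
    (stirling2 n l : ℝ) * l.factorial / n.factorial := by
  intro n
  induction n with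
  | zero =>
    intro l
    rw [PowerSeries.coeff_zero_eq_constantCoeff, map_pow]
    have h0 : PowerSeries.constantCoeff (PowerSeries.exp ℝ - 1) = 0 := by
      simp [PowerSeries.constantCoeff_exp]
    rw [h0]
    cases l with
    | zero => simp [stirling2]
    | succ m => simp [stirling2, zero_pow]
  | succ n ih =>
    intro l
    cases l with
    | zero => simp [stirling2_zero_right, PowerSeries.coeff_one]
    | succ m =>
      have hD : PowerSeries.derivative ℝ ((PowerSeries.exp ℝ - 1)^(m+1)) =
          (PowerSeries.C ((m:ℝ)+1)) * ((PowerSeries.exp ℝ - 1)^(m+1) + (PowerSeries.exp ℝ - 1)^m) := by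
        rw [Derivation.leibniz_pow]
        have h1 : PowerSeries.derivative ℝ (PowerSeries.exp ℝ - 1) = PowerSeries.exp ℝ := by
          rw [map_sub, derivative_exp_real, Derivation.map_one_eq_zero, sub_zero]
        rw [h1]
        have h2 : PowerSeries.exp ℝ = (PowerSeries.exp ℝ - 1) + 1 := by ring
        have h3 : ((m+1 : ℕ) : PowerSeries ℝ) = PowerSeries.C ((m:ℝ)+1) := by
          have := map_natCast (PowerSeries.C (R := ℝ)) (m+1)
          rw [← this]; push_cast; ring
        rw [nsmul_eq_mul, smul_eq_mul, h3]
        simp only [Nat.add_sub_cancel]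
        rw [h2]
        ring
      have hc := PowerSeries.coeff_derivative ((PowerSeries.exp ℝ - 1)^(m+1)) n
      rw [hD] at hc
      rw [PowerSeries.coeff_C_mul, map_add, ih, ih] at hc
      have hfac : ((n+1).factorial : ℝ) = (n+1) * n.factorial := by
        rw [Nat.factorial_succ]; push_cast; ring
      have hst : (stirling2 (n+1) (m+1) : ℝ) = (m+1) * stirling2 n (m+1) + stirling2 n m := by
        show ((((m + 1) * stirling2 n (m + 1) + stirling2 n m) : ℕ) : ℝ) = _
        push_cast; ring
      have hn0 : ((n:ℝ)+1) ≠ 0 := by positivity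
      have hf0 : (n.factorial : ℝ) ≠ 0 := Nat.cast_ne_zero.mpr n.factorial_ne_zero
      have hmf : ((m+1).factorial : ℝ) = (m+1) * m.factorial := by
        rw [Nat.factorial_succ]; push_cast; ring
      have := hc
      field_simp at this ⊢
      rw [hfac, hst, hmf]
      rw [hmf] at this
      push_cast at this ⊢
      nlinarith [this]

lemma sum_stirling_asc (n : ℕ) (x : ℝ) :
    ∑ l ∈ Finset.range (n+1), (-1:ℝ)^l * (stirling2 n l : ℝ) * ∏ j ∈ Finset.range l, (x+(j:ℝ))
      = (-x)^n := by
  induction n with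
  | zero => simp [stirling2]
  | succ n ih =>
    set g : ℕ → ℝ := fun l => (-1:ℝ)^l * (l:ℝ) * (stirling2 n l : ℝ) *
      ∏ j ∈ Finset.range l, (x+(j:ℝ)) with hg
    set b : ℕ → ℝ := fun l => (-1:ℝ) * ((-1:ℝ)^l * (stirling2 n l : ℝ) *
      (∏ j ∈ Finset.range l, (x+(j:ℝ))) * (x+(l:ℝ))) with hb
    have key : ∀ l ∈ Finset.range (n+1),
        (-1:ℝ)^(l+1) * (stirling2 (n+1) (l+1) : ℝ) * ∏ j ∈ Finset.range (l+1), (x+(j:ℝ))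
          = g (l+1) + b l := by
      intro l _
      have hst : (stirling2 (n+1) (l+1) : ℝ) = ((l:ℝ)+1) * stirling2 n (l+1) + stirling2 n l := by
        show ((((l + 1) * stirling2 n (l + 1) + stirling2 n l) : ℕ) : ℝ) = _
        push_cast; ring
      rw [hst, hg, hb]
      simp only [Finset.prod_range_succ]
      push_cast
      ring
    rw [Finset.sum_range_succ']
    rw [Finset.sum_congr rfl key, Finset.sum_add_distrib]
    have hg0 : g 0 = 0 := by simp [hg]
    have hgn : g (n+1) = 0 := by
      simp [hg, stirling2_eq_zero_of_lt (Nat.lt_succ_self n)]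
    have hshift : ∑ l ∈ Finset.range (n+1), g (l+1) = ∑ l ∈ Finset.range (n+1), g l := by
      have h1 := Finset.sum_range_succ' g (n+1)
      have h2 := Finset.sum_range_succ g (n+1)
      rw [h2, hgn, hg0] at h1
      linarith
    rw [hshift]
    have hcomb : ∑ l ∈ Finset.range (n+1), g l + ∑ l ∈ Finset.range (n+1), b l
        = (-x) * ∑ l ∈ Finset.range (n+1),
            (-1:ℝ)^l * (stirling2 n l : ℝ) * ∏ j ∈ Finset.range l, (x+(j:ℝ)) := by
      rw [← Finset.sum_add_distrib, Finset.mul_sum]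
      refine Finset.sum_congr rfl fun l _ => ?_
      rw [hg, hb]; ring
    have hz : (-1:ℝ)^0 * (stirling2 (n+1) 0 : ℝ) * ∏ j ∈ Finset.range 0, (x+(j:ℝ)) = 0 := by
      simp [stirling2_zero_right]
    rw [hz, add_zero, hcomb, ih]
    ring

lemma rescale_neg_one_pow (l : ℕ) :
    (PowerSeries.rescale (-1:ℝ) (PowerSeries.exp ℝ))^l
      = PowerSeries.rescale (-(l:ℝ)) (PowerSeries.exp ℝ) := by
  induction l with
  | zero =>
    simp only [pow_zero, Nat.cast_zero, neg_zero]
    rw [PowerSeries.rescale_zero]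
    simp [PowerSeries.constantCoeff_exp]
  | succ l ih =>
    rw [pow_succ, ih, PowerSeries.exp_mul_exp_eq_exp_add]
    push_cast
    ring_nf

lemma expm1_mul (l : ℕ) :
    PowerSeries.rescale (-(l:ℝ)) (PowerSeries.exp ℝ) * (PowerSeries.exp ℝ - 1)^l
      = (1 - PowerSeries.rescale (-1:ℝ) (PowerSeries.exp ℝ))^l := by
  rw [← rescale_neg_one_pow, ← mul_pow]
  congr 1
  have h : PowerSeries.rescale (-1:ℝ) (PowerSeries.exp ℝ) * PowerSeries.exp ℝ = 1 := by
    have h2 := PowerSeries.exp_mul_exp_eq_exp_add (-1:ℝ) 1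
    simp only [PowerSeries.rescale_one, RingHom.id_apply, neg_add_cancel] at h2
    rw [h2, PowerSeries.rescale_zero]
    simp [PowerSeries.constantCoeff_exp]
  rw [mul_sub, h, mul_one]

lemma coeff_one_sub_em_pow (l m : ℕ) :
    PowerSeries.coeff m ((1 - PowerSeries.rescale (-1:ℝ) (PowerSeries.exp ℝ))^l)
      = (-1:ℝ)^(l+m) * (stirling2 m l : ℝ) * l.factorial / m.factorial := by
  have h : (1 - PowerSeries.rescale (-1:ℝ) (PowerSeries.exp ℝ))
      = -1 * PowerSeries.rescale (-1:ℝ) (PowerSeries.exp ℝ - 1) := by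
    rw [map_sub, map_one]; ring
  rw [h, mul_pow, ← map_pow]
  have hn1 : ((-1 : PowerSeries ℝ))^l = PowerSeries.C ((-1:ℝ)^l) := by
    rw [map_pow, map_neg, map_one]
  rw [hn1, PowerSeries.coeff_C_mul, PowerSeries.coeff_rescale, coeff_expm1_pow]
  rw [pow_add]
  ring

lemma coeff_sum_expansion (x : ℝ) (n m : ℕ) (hm : m ≤ n) :
    PowerSeries.coeff m (∑ l ∈ Finset.range (n+1),
      PowerSeries.C ((∏ j ∈ Finset.range l, (x+(j:ℝ))) / l.factorial) *
        (1 - PowerSeries.rescale (-1:ℝ) (PowerSeries.exp ℝ))^l)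
      = x^m / m.factorial := by
  rw [map_sum]
  simp only [PowerSeries.coeff_C_mul, coeff_one_sub_em_pow]
  have hsub : Finset.range (m+1) ⊆ Finset.range (n+1) := by
    intro i hi; simp only [Finset.mem_range] at *; omega
  rw [← Finset.sum_subset hsub (by
    intro l hl hlm
    simp only [Finset.mem_range] at hl hlm
    have : m < l := by omega
    rw [stirling2_eq_zero_of_lt this]
    simp)]
  have hstep : ∀ l ∈ Finset.range (m+1),
      (∏ j ∈ Finset.range l, (x+(j:ℝ))) / l.factorial *
        ((-1:ℝ)^(l+m) * (stirling2 m l : ℝ) * l.factorial / m.factorial)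
      = ((-1:ℝ)^m / m.factorial) *
        ((-1:ℝ)^l * (stirling2 m l : ℝ) * ∏ j ∈ Finset.range l, (x+(j:ℝ))) := by
    intro l _
    have hl0 : (l.factorial : ℝ) ≠ 0 := Nat.cast_ne_zero.mpr l.factorial_ne_zero
    rw [pow_add]
    field_simp
  rw [Finset.sum_congr rfl hstep, ← Finset.mul_sum, sum_stirling_asc]
  have hxx : ((-1:ℝ))^m * (-x)^m = x^m := by rw [← mul_pow]; norm_num
  rw [div_mul_eq_mul_div, hxx]

lemma cancel_one_add_exp (f : PowerSeries ℝ) (n : ℕ)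
    (h : ∀ m, m ≤ n → PowerSeries.coeff m ((1 + PowerSeries.exp ℝ) * f) = 0) :
    ∀ m, m ≤ n → PowerSeries.coeff m f = 0 := by
  intro m
  induction m using Nat.strong_induction_on with
  | _ m ih =>
    intro hmn
    have hc := h m hmn
    rw [PowerSeries.coeff_mul, Finset.Nat.sum_antidiagonal_eq_sum_range_succ_mk,
      Finset.sum_range_succ'] at hc
    have hz : ∀ i ∈ Finset.range m,
        PowerSeries.coeff (i+1) (1 + PowerSeries.exp ℝ) *
          PowerSeries.coeff (m-(i+1)) f = 0 := by
      intro i hi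
      simp only [Finset.mem_range] at hi
      rw [ih (m-(i+1)) (by omega) (by omega), mul_zero]
    rw [Finset.sum_congr rfl hz, Finset.sum_const_zero, zero_add] at hc
    have h0 : PowerSeries.coeff 0 (1 + PowerSeries.exp ℝ) = 2 := by
      rw [map_add, coeff_exp_real]
      simp only [PowerSeries.coeff_zero_eq_constantCoeff, map_one, Nat.factorial_zero]
      norm_num
    rw [h0] at hc
    simpa using hc

theorem pqPolyEuler_eq_sum_stirling2_risingFactorial
    (p q : ℝ) (hq : 0 < q) (hqp : q < p) (hp : p ≤ 1) (k : ℤ)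
    (E : ℝ → ℕ → ℝ)
    (hE : ∀ x : ℝ,
      2 * pqLi p q k (1 - PowerSeries.rescale (-1) (PowerSeries.exp ℝ)) *
          PowerSeries.rescale x (PowerSeries.exp ℝ) =
        (1 + PowerSeries.exp ℝ) * egf (E x)) :
    ∀ (n : ℕ) (x : ℝ),
      E x n =
        ∑ l ∈ Finset.range (n + 1), ∑ i ∈ Finset.Icc l n,
          (n.choose i : ℝ) * (stirling2 i l : ℝ) * E (-(l : ℝ)) (n - i) *
            ∏ j ∈ Finset.range l, (x + (j : ℝ)) := by
  intro n x
  set T : PowerSeries ℝ := ∑ l ∈ Finset.range (n+1),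
      PowerSeries.C ((∏ j ∈ Finset.range l, (x+(j:ℝ))) / l.factorial) *
        ((PowerSeries.exp ℝ - 1)^l * egf (E (-(l:ℝ)))) with hT
  set S : PowerSeries ℝ := ∑ l ∈ Finset.range (n+1),
      PowerSeries.C ((∏ j ∈ Finset.range l, (x+(j:ℝ))) / l.factorial) *
        (1 - PowerSeries.rescale (-1:ℝ) (PowerSeries.exp ℝ))^l with hS
  have hAT : (1 + PowerSeries.exp ℝ) * T
      = 2 * pqLi p q k (1 - PowerSeries.rescale (-1) (PowerSeries.exp ℝ)) * S := by
    rw [hT, hS, Finset.mul_sum, Finset.mul_sum]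
    refine Finset.sum_congr rfl fun l _ => ?_
    have h1 : (1 + PowerSeries.exp ℝ) *
        (PowerSeries.C ((∏ j ∈ Finset.range l, (x+(j:ℝ))) / l.factorial) *
          ((PowerSeries.exp ℝ - 1)^l * egf (E (-(l:ℝ)))))
        = PowerSeries.C ((∏ j ∈ Finset.range l, (x+(j:ℝ))) / l.factorial) *
          ((PowerSeries.exp ℝ - 1)^l * ((1 + PowerSeries.exp ℝ) * egf (E (-(l:ℝ))))) := by
      ring
    rw [h1, ← hE (-(l:ℝ)), ← expm1_mul l]
    ring
  have hD0 : ∀ m, m ≤ n →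
      PowerSeries.coeff m (PowerSeries.rescale x (PowerSeries.exp ℝ) - S) = 0 := by
    intro m hm
    rw [map_sub, hS, coeff_sum_expansion x n m hm, PowerSeries.coeff_rescale, coeff_exp_real]
    ring
  have hzero : ∀ m, m ≤ n →
      PowerSeries.coeff m ((1 + PowerSeries.exp ℝ) * (egf (E x) - T)) = 0 := by
    intro m hm
    have heq : (1 + PowerSeries.exp ℝ) * (egf (E x) - T)
        = (2 * pqLi p q k (1 - PowerSeries.rescale (-1) (PowerSeries.exp ℝ))) *
          (PowerSeries.rescale x (PowerSeries.exp ℝ) - S) := by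
      rw [mul_sub, hAT, ← hE x]
      ring
    rw [heq, PowerSeries.coeff_mul]
    apply Finset.sum_eq_zero
    intro pr hpr
    rw [Finset.HasAntidiagonal.mem_antidiagonal] at hpr
    rw [hD0 pr.2 (by omega), mul_zero]
  have hcancel := cancel_one_add_exp _ n hzero n le_rfl
  rw [map_sub, sub_eq_zero] at hcancel
  have hEn : PowerSeries.coeff n (egf (E x)) = E x n / n.factorial := by
    simp only [egf, PowerSeries.coeff_mk]
  have hTn : PowerSeries.coeff n T = ∑ l ∈ Finset.range (n+1), ∑ i ∈ Finset.range (n+1),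
      ((∏ j ∈ Finset.range l, (x+(j:ℝ))) / l.factorial) *
        ((stirling2 i l : ℝ) * l.factorial / i.factorial) *
        (E (-(l:ℝ)) (n-i) / (n-i).factorial) := by
    rw [hT, map_sum]
    refine Finset.sum_congr rfl fun l _ => ?_
    rw [PowerSeries.coeff_C_mul, PowerSeries.coeff_mul,
      Finset.Nat.sum_antidiagonal_eq_sum_range_succ_mk, Finset.mul_sum]
    refine Finset.sum_congr rfl fun i _ => ?_
    simp only [coeff_expm1_pow, egf, PowerSeries.coeff_mk]
    ring
  rw [hEn, hTn] at hcancel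
  have hnf : (n.factorial : ℝ) ≠ 0 := Nat.cast_ne_zero.mpr n.factorial_ne_zero
  rw [div_eq_iff hnf] at hcancel
  rw [hcancel, Finset.sum_mul]
  refine Finset.sum_congr rfl fun l hl => ?_
  rw [Finset.sum_mul]
  have hsub : Finset.Icc l n ⊆ Finset.range (n+1) := by
    intro i hi
    rw [Finset.mem_Icc] at hi
    rw [Finset.mem_range]
    omega
  rw [← Finset.sum_subset hsub (by
    intro i hi hni
    rw [Finset.mem_range] at hi
    rw [Finset.mem_Icc] at hni
    have hil : i < l := by omega
    rw [stirling2_eq_zero_of_lt hil]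
    simp)]
  refine Finset.sum_congr rfl fun i hi => ?_
  rw [Finset.mem_Icc] at hi
  have hin : i ≤ n := hi.2
  rw [Nat.cast_choose ℝ hin]
  have hi0 : (i.factorial : ℝ) ≠ 0 := Nat.cast_ne_zero.mpr i.factorial_ne_zero
  have hl0 : (l.factorial : ℝ) ≠ 0 := Nat.cast_ne_zero.mpr l.factorial_ne_zero
  have hni0 : ((n-i).factorial : ℝ) ≠ 0 := Nat.cast_ne_zero.mpr (n-i).factorial_ne_zero
  field_simp
end

section
/- For every integer n ≥ 0, every integer k, every positive integer s, every real u with u ≠ 1, and every real x: E_{n,p,q}^{(k)}(x) = (1/(1−u)^s) · Σ_{l=0}^{n} binom(n,l) · Σ_{i=0}^{s} binom(s,i) · (−u)^{s−i} · H_l^{(s)}(x;u) · E_{n−l,p,q}^{(k)}(i). -/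
open Finset

theorem pqPolyEuler_eq_sum_frobenius_euler
    (p q : ℝ) (hq : 0 < q) (hqp : q < p) (hp : p ≤ 1) (k : ℤ)
    (E : ℝ → ℕ → ℝ)
    (hE : ∀ x : ℝ,
      2 * pqLi p q k (1 - PowerSeries.rescale (-1) (PowerSeries.exp ℝ)) *
          PowerSeries.rescale x (PowerSeries.exp ℝ) =
        (1 + PowerSeries.exp ℝ) * egf (E x))
    (s : ℕ) (hs : 1 ≤ s) (u : ℝ) (hu : u ≠ 1)
    (H : ℝ → ℕ → ℝ)
    (hH : ∀ x : ℝ,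
      PowerSeries.C ((1 - u) ^ s) * PowerSeries.rescale x (PowerSeries.exp ℝ) =
        (PowerSeries.exp ℝ - PowerSeries.C u) ^ s * egf (H x)) :
    ∀ (n : ℕ) (x : ℝ),
      E x n =
        (1 / (1 - u) ^ s) *
          ∑ l ∈ Finset.range (n + 1), (n.choose l : ℝ) *
            ∑ i ∈ Finset.range (s + 1),
              (s.choose i : ℝ) * (-u) ^ (s - i) * H x l * E (i : ℝ) (n - l) := by
  intro n x
  set F := 2 * pqLi p q k (1 - PowerSeries.rescale (-1) (PowerSeries.exp ℝ)) with hF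
  set G := 1 + PowerSeries.exp ℝ with hG
  have hGne : G ≠ 0 := by
    intro h
    have h2 := congrArg (PowerSeries.constantCoeff) h
    simp [hG] at h2
  have hbin : (PowerSeries.exp ℝ - PowerSeries.C u) ^ s =
      ∑ i ∈ range (s+1), PowerSeries.C ((s.choose i : ℝ) * (-u)^(s-i)) *
        PowerSeries.rescale (i:ℝ) (PowerSeries.exp ℝ) := by
    rw [sub_eq_add_neg, add_pow]
    refine Finset.sum_congr rfl fun i hi => ?_
    rw [← PowerSeries.exp_pow_eq_rescale_exp, ← map_neg, ← map_pow, map_mul,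
      ← map_natCast (PowerSeries.C)]
    ring
  have key : G * (PowerSeries.C ((1-u)^s) * egf (E x)) =
      G * (egf (H x) * ∑ i ∈ range (s+1),
        PowerSeries.C ((s.choose i : ℝ) * (-u)^(s-i)) * egf (E (i:ℝ))) := by
    calc G * (PowerSeries.C ((1-u)^s) * egf (E x))
        = PowerSeries.C ((1-u)^s) * (G * egf (E x)) := by ring
      _ = PowerSeries.C ((1-u)^s) * (F * PowerSeries.rescale x (PowerSeries.exp ℝ)) := by
          rw [← hE x]
      _ = F * (PowerSeries.C ((1-u)^s) * PowerSeries.rescale x (PowerSeries.exp ℝ)) := by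
          ring
      _ = F * ((PowerSeries.exp ℝ - PowerSeries.C u) ^ s * egf (H x)) := by rw [hH x]
      _ = egf (H x) * ((∑ i ∈ range (s+1),
            PowerSeries.C ((s.choose i : ℝ) * (-u)^(s-i)) *
              PowerSeries.rescale (i:ℝ) (PowerSeries.exp ℝ)) * F) := by rw [← hbin]; ring
      _ = egf (H x) * ∑ i ∈ range (s+1),
            PowerSeries.C ((s.choose i : ℝ) * (-u)^(s-i)) *
              (F * PowerSeries.rescale (i:ℝ) (PowerSeries.exp ℝ)) := by
          rw [Finset.sum_mul]; congr 1; refine Finset.sum_congr rfl fun i _ => ?_; ring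
      _ = egf (H x) * ∑ i ∈ range (s+1),
            PowerSeries.C ((s.choose i : ℝ) * (-u)^(s-i)) * (G * egf (E (i:ℝ))) := by
          congr 1; refine Finset.sum_congr rfl fun i _ => ?_; rw [hE (i:ℝ)]
      _ = G * (egf (H x) * ∑ i ∈ range (s+1),
            PowerSeries.C ((s.choose i : ℝ) * (-u)^(s-i)) * egf (E (i:ℝ))) := by
          rw [Finset.mul_sum, Finset.mul_sum, Finset.mul_sum]
          exact Finset.sum_congr rfl fun i _ => by ring
  have heq := mul_left_cancel₀ hGne key
  have hco := congrArg (PowerSeries.coeff n) heq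
  rw [PowerSeries.coeff_C_mul, PowerSeries.coeff_mul] at hco
  simp only [egf, PowerSeries.coeff_mk, map_sum, PowerSeries.coeff_C_mul] at hco
  rw [Finset.Nat.sum_antidiagonal_eq_sum_range_succ_mk] at hco
  -- hco : (1-u)^s * (E x n / n!) = ∑ l ∈ range (n+1), (H x l / l!) * ∑ i, c_i * (E i (n-l) / (n-l)!)
  have hune : (1 - u) ^ s ≠ 0 := pow_ne_zero _ (sub_ne_zero.mpr (Ne.symm hu))
  have hfac : (n.factorial : ℝ) ≠ 0 := Nat.cast_ne_zero.mpr n.factorial_ne_zero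
  have hmain : (1-u)^s * E x n =
      ∑ l ∈ Finset.range (n + 1), (n.choose l : ℝ) *
        ∑ i ∈ Finset.range (s + 1),
          (s.choose i : ℝ) * (-u) ^ (s - i) * H x l * E (i : ℝ) (n - l) := by
    have h3 := congrArg (fun r => (n.factorial : ℝ) * r) hco
    simp only at h3
    rw [Finset.mul_sum] at h3
    calc (1-u)^s * E x n = (n.factorial : ℝ) * ((1-u)^s * (E x n / n.factorial)) := by
          field_simp
      _ = ∑ l ∈ range (n+1), (n.factorial : ℝ) *
            (H x l / l.factorial * ∑ i ∈ range (s+1),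
              (s.choose i : ℝ) * (-u)^(s-i) * (E (i:ℝ) (n-l) / (n-l).factorial)) := h3
      _ = _ := by
          refine Finset.sum_congr rfl fun l hl => ?_
          have hln : l ≤ n := Nat.lt_succ_iff.mp (Finset.mem_range.mp hl)
          have hch : ((n.choose l : ℝ)) * l.factorial * (n-l).factorial = n.factorial := by
            exact_mod_cast Nat.choose_mul_factorial_mul_factorial hln
          have hlf : (l.factorial : ℝ) ≠ 0 := Nat.cast_ne_zero.mpr l.factorial_ne_zero
          have hnlf : ((n-l).factorial : ℝ) ≠ 0 := Nat.cast_ne_zero.mpr (n-l).factorial_ne_zero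
          rw [Finset.mul_sum, Finset.mul_sum, Finset.mul_sum]
          refine Finset.sum_congr rfl fun i _ => ?_
          rw [← hch]
          field_simp
  rw [← hmain, one_div, inv_mul_cancel_left₀ hune]
end

section
/- For every integer k ≥ 0, all real numbers p, q with 0 < q < p ≤ 1, and every real x with |x| < 1, the series Σ_{n=1}^{∞} [n]_{p,q}^k · x^n converges and equals (1/(p−q)^k) · Σ_{l=0}^{k} (−1)^{k−l} · binom(k,l) · (p^l q^{k−l} x)/(1 − p^l q^{k−l} x). -/
open Finset

theorem pqPolylog_neg_order_rational
    (k : ℕ) (p q : ℝ) (hq : 0 < q) (hqp : q < p) (hp : p ≤ 1)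
    (x : ℝ) (hx : |x| < 1) :
    HasSum (fun n : ℕ => pqInt p q (n + 1) ^ k * x ^ (n + 1))
      ((1 / (p - q) ^ k) *
        ∑ l ∈ Finset.range (k + 1),
          (-1 : ℝ) ^ (k - l) * (k.choose l : ℝ) *
            (p ^ l * q ^ (k - l) * x) / (1 - p ^ l * q ^ (k - l) * x)) := by
  have hpq : (0:ℝ) < p - q := sub_pos.2 hqp
  have key : ∀ l ∈ Finset.range (k + 1),
      HasSum (fun n : ℕ => (-1:ℝ) ^ (k - l) * (k.choose l : ℝ) *
          (p ^ l * q ^ (k - l) * x) ^ (n + 1))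
        ((-1:ℝ) ^ (k - l) * (k.choose l : ℝ) *
          (p ^ l * q ^ (k - l) * x) / (1 - p ^ l * q ^ (k - l) * x)) := by
    intro l _
    set r : ℝ := p ^ l * q ^ (k - l) with hr
    have hp0 : (0:ℝ) < p := hq.trans hqp
    have hr0 : 0 < r := by positivity
    have hr1 : r ≤ 1 := by
      have h1 : p ^ l ≤ 1 := pow_le_one₀ (by linarith) hp
      have h2 : q ^ (k - l) ≤ 1 := pow_le_one₀ hq.le (by linarith)
      calc r ≤ 1 * 1 := mul_le_mul h1 h2 (by positivity) zero_le_one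
        _ = 1 := by ring
    have habs : |r * x| < 1 := by
      rw [abs_mul, abs_of_pos hr0]
      calc r * |x| ≤ 1 * |x| := by nlinarith [abs_nonneg x]
        _ < 1 := by simpa using hx
    have h := ((hasSum_geometric_of_norm_lt_one (by rwa [Real.norm_eq_abs])).mul_left (r * x)).mul_left
      ((-1:ℝ) ^ (k - l) * (k.choose l : ℝ))
    have hne : (1 : ℝ) - r * x ≠ 0 := by
      have := abs_lt.1 habs
      linarith [this.2]
    convert h using 1
    · rfl
    · funext n; ring
    · field_simp
  have hsum := hasSum_sum key
  have h2 := hsum.mul_left (1 / (p - q) ^ k)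
  convert h2 using 1
  · rfl
  funext n
  rw [pqInt, div_pow, div_eq_mul_inv, sub_pow, Finset.sum_mul, Finset.sum_mul]
  rw [Finset.mul_sum]
  apply Finset.sum_congr rfl
  intro l hl
  rw [Finset.mem_range] at hl
  have e1 : (p ^ l) ^ (n + 1) = (p ^ (n+1)) ^ l := by rw [← pow_mul, ← pow_mul, Nat.mul_comm]
  have e2 : (q ^ (k - l)) ^ (n + 1) = (q ^ (n+1)) ^ (k - l) := by
    rw [← pow_mul, ← pow_mul, Nat.mul_comm]
  have e3 : (-1:ℝ) ^ (l + k) = (-1:ℝ) ^ (k - l) := by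
    rw [show l + k = k - l + 2 * l by omega, pow_add]
    simp [pow_mul]
  rw [mul_pow, mul_pow, e1, e2, ← e3, one_div]
  ring
end

section
/- For every integer n ≥ 1, every integer k, and every real x: B_{n,p,q}^{(k)}(x) = Σ_{m=0}^{n} (−1)^{m+n} · m! · S_2(n,m,x) / [m+1]_{p,q}^k. -/
open Finset

/-- The power series `∑_{m ≥ 0} (1 - e^{-t})^m / [m+1]_{p,q}^k`
(which equals `Li_{k,p,q}(1 - e^{-t}) / (1 - e^{-t})`).
Since `(1 - e^{-t})^m` has order at least `m`, the `n`-th coefficient only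
receives contributions from `m ≤ n`. -/
noncomputable def pqBernSeries (p q : ℝ) (k : ℤ) : PowerSeries ℝ :=
  PowerSeries.mk fun n =>
    ∑ m ∈ Finset.range (n + 1),
      PowerSeries.coeff n ((1 - PowerSeries.rescale (-1) (PowerSeries.exp ℝ)) ^ m) /
        pqInt p q (m + 1) ^ k

/-- Carlitz's weighted Stirling numbers of the second kind. -/
noncomputable def stirling2W (n m : ℕ) (x : ℝ) : ℝ :=
  (1 / (m.factorial : ℝ)) *
    ∑ j ∈ Finset.range (m + 1), (-1 : ℝ) ^ (m - j) * (m.choose j : ℝ) * (x + j) ^ n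

open PowerSeries

noncomputable abbrev E : PowerSeries ℝ := PowerSeries.rescale (-1) (PowerSeries.exp ℝ)

lemma coeff_one_sub_E_pow_eq_zero {i m : ℕ} (h : i < m) :
    PowerSeries.coeff i ((1 - E) ^ m) = 0 := by
  have hd : (PowerSeries.X : PowerSeries ℝ) ∣ (1 - E) := by
    rw [PowerSeries.X_dvd_iff, map_sub, ← PowerSeries.coeff_zero_eq_constantCoeff_apply,
      ← PowerSeries.coeff_zero_eq_constantCoeff_apply, PowerSeries.coeff_rescale]
    simp
  have := pow_dvd_pow_of_dvd hd m
  exact (PowerSeries.X_pow_dvd_iff.mp this) i h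

lemma Epow_mul (j : ℕ) (a : ℝ) :
    E ^ j * rescale a (exp ℝ) = rescale (a - j) (exp ℝ) := by
  have h1 : E ^ j = rescale (-(j:ℝ)) (exp ℝ) := by
    rw [← map_pow, exp_pow_eq_rescale_exp, rescale_rescale]
    norm_num
  rw [h1, exp_mul_exp_eq_exp_add]
  ring_nf

lemma coeff_pow_mul (m n : ℕ) (x : ℝ) :
    PowerSeries.coeff n ((1 - E) ^ m * rescale (-x) (exp ℝ)) =
      (-1:ℝ) ^ (n + m) * m.factorial *
        ((1 / (m.factorial : ℝ)) *
          ∑ j ∈ Finset.range (m + 1), (-1:ℝ) ^ (m - j) * (m.choose j : ℝ) * (x + j) ^ n)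
        / n.factorial := by
  have hbin : ((1 : PowerSeries ℝ) - E) ^ m
      = ∑ j ∈ Finset.range (m + 1), (-1:ℝ) ^ j • (E ^ j * (m.choose j : ℝ) • 1) := by
    have : (1 : PowerSeries ℝ) - E = -E + 1 := by ring
    rw [this, add_pow]
    apply Finset.sum_congr rfl
    intro j hj
    rw [neg_pow]
    simp [smul_smul, mul_comm, mul_assoc, mul_left_comm, Algebra.smul_def]
  rw [hbin, Finset.sum_mul, map_sum]
  simp only [Finset.mul_sum, Finset.sum_div]
  apply Finset.sum_congr rfl
  intro j hj
  have hjm : j ≤ m := Nat.lt_succ_iff.mp (Finset.mem_range.mp hj)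
  have : ((-1:ℝ) ^ j • (E ^ j * (m.choose j : ℝ) • 1)) * rescale (-x) (exp ℝ)
      = ((-1:ℝ) ^ j * (m.choose j : ℝ)) • (E ^ j * rescale (-x) (exp ℝ)) := by
    simp [Algebra.smul_def]; ring
  rw [this, map_smul, Epow_mul, smul_eq_mul, coeff_rescale, coeff_exp]
  have hsgn : (-1:ℝ) ^ (n + m) * (-1:ℝ) ^ (m - j) = (-1:ℝ) ^ n * (-1:ℝ) ^ j := by
    rw [← pow_add, ← pow_add, show n + m + (m - j) = n + j + 2 * (m - j) by omega,
      pow_add, pow_mul]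
    norm_num
  have hx : (-x - (j:ℝ)) ^ n = (-1:ℝ) ^ n * (x + j) ^ n := by
    rw [show (-x - (j:ℝ)) = (-1) * (x + j) by ring, mul_pow]
  have hfac : (algebraMap ℚ ℝ) (1 / (n.factorial : ℚ)) = 1 / (n.factorial : ℝ) := by
    push_cast [map_div₀]; simp
  rw [pow_add] at hsgn
  rw [hx, hfac]
  field_simp
  linear_combination (-(m.choose j : ℝ) * (x + j) ^ n) * hsgn

theorem pqPolyBernoulli_eq_sum_weighted_stirling2
    (p q : ℝ) (hq : 0 < q) (hqp : q < p) (hp : p ≤ 1) (k : ℤ)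
    (B : ℝ → ℕ → ℝ)
    (hB : ∀ x : ℝ,
      pqBernSeries p q k * PowerSeries.rescale (-x) (PowerSeries.exp ℝ) = egf (B x)) :
    ∀ (n : ℕ), 1 ≤ n → ∀ x : ℝ,
      B x n =
        ∑ m ∈ Finset.range (n + 1),
          (-1 : ℝ) ^ (m + n) * (m.factorial : ℝ) * stirling2W n m x /
            pqInt p q (m + 1) ^ k := by
  intro n hn x
  set c : ℕ → ℝ := fun m => pqInt p q (m + 1) ^ k with hcdef
  have hc := congrArg (PowerSeries.coeff n) (hB x)
  rw [PowerSeries.coeff_mul] at hc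
  rw [show (PowerSeries.coeff n) (egf (B x)) = B x n / n.factorial from by
    simp [egf]] at hc
  have h1 : ∀ ab ∈ Finset.HasAntidiagonal.antidiagonal n,
      PowerSeries.coeff ab.1 (pqBernSeries p q k) =
        ∑ m ∈ Finset.range (n + 1), PowerSeries.coeff ab.1 ((1 - E) ^ m) / c m := by
    intro ab hab
    have hab1 : ab.1 ≤ n := by
      have := Finset.HasAntidiagonal.mem_antidiagonal.mp hab; omega
    rw [pqBernSeries, PowerSeries.coeff_mk]
    apply Finset.sum_subset
    · intro m hm
      simp only [Finset.mem_range] at hm ⊢; omega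
    · intro m hm hm2
      simp only [Finset.mem_range] at hm hm2
      rw [coeff_one_sub_E_pow_eq_zero (by omega)]
      simp
  rw [Finset.sum_congr rfl (fun ab hab => by rw [h1 ab hab, Finset.sum_mul])] at hc
  rw [Finset.sum_comm] at hc
  have h2 : ∀ m ∈ Finset.range (n + 1),
      (∑ ab ∈ Finset.HasAntidiagonal.antidiagonal n,
        PowerSeries.coeff ab.1 ((1 - E) ^ m) / c m *
          PowerSeries.coeff ab.2 (PowerSeries.rescale (-x) (PowerSeries.exp ℝ))) =
      ((-1 : ℝ) ^ (n + m) * m.factorial * stirling2W n m x / n.factorial) / c m := by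
    intro m hm
    rw [show (∑ ab ∈ Finset.HasAntidiagonal.antidiagonal n,
        PowerSeries.coeff ab.1 ((1 - E) ^ m) / c m *
          PowerSeries.coeff ab.2 (PowerSeries.rescale (-x) (PowerSeries.exp ℝ))) =
      (∑ ab ∈ Finset.HasAntidiagonal.antidiagonal n,
        PowerSeries.coeff ab.1 ((1 - E) ^ m) *
          PowerSeries.coeff ab.2 (PowerSeries.rescale (-x) (PowerSeries.exp ℝ))) / c m from by
        rw [Finset.sum_div]; exact Finset.sum_congr rfl fun ab _ => by ring]
    rw [← PowerSeries.coeff_mul, coeff_pow_mul, stirling2W]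
  rw [Finset.sum_congr rfl h2] at hc
  have hfn : (n.factorial : ℝ) ≠ 0 := Nat.cast_ne_zero.mpr n.factorial_ne_zero
  have hB' : B x n = (∑ m ∈ Finset.range (n + 1),
      ((-1 : ℝ) ^ (n + m) * m.factorial * stirling2W n m x / n.factorial) / c m) *
      n.factorial := by
    rw [hc]; field_simp
  rw [hB', Finset.sum_mul]
  apply Finset.sum_congr rfl
  intro m hm
  rw [add_comm m n, div_div, mul_comm (n.factorial : ℝ) (c m), ← div_div,
    div_mul_cancel₀ _ hfn]
end
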